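/- Let 𝐃 be a quantum divergence on pairs of (normalized) density matrices, and define its maximal extension to subnormalized states by 𝐃̄(ρ̃∥σ̃) = inf{𝐃(ρ∥σ) : ρ, σ density matrices on some system R, ℰ trace-non-increasing CP map with ℰ(ρ)=ρ̃, ℰ(σ)=σ̃}. Then 𝐃̄(ρ̃∥σ̃) = 𝐃(ρ̃ ⊕ (1−Tr ρ̃) ∥ σ̃ ⊕ (1−Tr σ̃)), where ρ̃ ⊕ c denotes the block-diagonal density matrix obtained by appending the scalar c. -/

import Mathlib

open scoped ENNReal Kronecker ComplexOrder Matrix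
open Classical

/-- A density matrix: positive semidefinite with unit trace. -/
def IsDensity {n : Type} [Fintype n] (ρ : Matrix n n ℂ) : Prop :=
  ρ.PosSemidef ∧ ρ.trace = 1

/-- The extension `id_m ⊗ Φ` of a map `Φ` on matrices, acting blockwise. -/
def cpExt {a b : Type} (Φ : Matrix a a ℂ → Matrix b b ℂ) (m : Type)
    (M : Matrix (m × a) (m × a) ℂ) : Matrix (m × b) (m × b) ℂ :=
  Matrix.of fun p q => Φ (Matrix.of fun k l => M (p.1, k) (q.1, l)) p.2 q.2

/-- A map on matrices is completely positive if every extension `id_m ⊗ Φ`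
preserves positive semidefiniteness. -/
def IsCP {a b : Type} [Fintype a] [Fintype b] (Φ : Matrix a a ℂ → Matrix b b ℂ) : Prop :=
  ∀ (m : Type) [Fintype m] (M : Matrix (m × a) (m × a) ℂ),
    M.PosSemidef → (cpExt Φ m M).PosSemidef

/-- A quantum channel: a linear, completely positive, trace-preserving map. -/
def IsCPTP {a b : Type} [Fintype a] [Fintype b] (Φ : Matrix a a ℂ → Matrix b b ℂ) : Prop :=
  (∀ (c : ℂ) (A B : Matrix a a ℂ), Φ (c • A + B) = c • Φ A + Φ B) ∧
    IsCP Φ ∧ ∀ A : Matrix a a ℂ, (Φ A).trace = A.trace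

/-- The projector onto the support of a Hermitian matrix. -/
noncomputable def suppProj {n : Type} [Fintype n] [DecidableEq n]
    (ρ : Matrix n n ℂ) : Matrix n n ℂ :=
  if h : ρ.IsHermitian then
    (h.eigenvectorUnitary : Matrix n n ℂ) *
      Matrix.diagonal (fun i => if h.eigenvalues i = 0 then (0 : ℂ) else 1) *
      (h.eigenvectorUnitary : Matrix n n ℂ)ᴴ
  else 0

/-- The min relative entropy `D_min(ρ‖σ) = -log₂ Tr[Π_ρ σ]` (with value `+∞` if
`Tr[Π_ρ σ] = 0`, i.e. if `ρ ⊥ σ`). -/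
noncomputable def Dmin {n : Type} [Fintype n] [DecidableEq n]
    (ρ σ : Matrix n n ℂ) : ℝ≥0∞ :=
  if ((suppProj ρ * σ).trace.re) = 0 then ∞
  else ENNReal.ofReal (- Real.logb 2 ((suppProj ρ * σ).trace.re))

/-- The max relative entropy `D_max(ρ‖σ) = log₂ min {t : tσ ≥ ρ}` (with value `+∞`
if no such `t` exists, i.e. if `supp ρ ⊄ supp σ`). -/
noncomputable def Dmax {n : Type} [Fintype n]
    (ρ σ : Matrix n n ℂ) : ℝ≥0∞ :=
  if ∃ t : ℝ, ((t : ℂ) • σ - ρ).PosSemidef then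
    ENNReal.ofReal (Real.logb 2 (sInf {t : ℝ | ((t : ℂ) • σ - ρ).PosSemidef}))
  else ∞

/-- A subnormalized state: positive semidefinite with trace at most one. -/
def IsSubnormalized {n : Type} [Fintype n] (ρ : Matrix n n ℂ) : Prop :=
  ρ.PosSemidef ∧ ρ.trace.re ≤ 1

/-- A trace-non-increasing completely positive (linear) map. -/
def IsTNICP {a b : Type} [Fintype a] [Fintype b] (Φ : Matrix a a ℂ → Matrix b b ℂ) : Prop :=
  (∀ (c : ℂ) (A B : Matrix a a ℂ), Φ (c • A + B) = c • Φ A + Φ B) ∧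
    IsCP Φ ∧ ∀ A : Matrix a a ℂ, A.PosSemidef → (Φ A).trace.re ≤ A.trace.re

/-- Append a `1 × 1` block with entry `c` to a matrix (direct sum `ρ ⊕ c`). -/
def appendBlock {n : Type} (ρ : Matrix n n ℂ) (c : ℂ) : Matrix (n ⊕ Unit) (n ⊕ Unit) ℂ :=
  Matrix.fromBlocks ρ 0 0 (Matrix.of fun _ _ => c)

/-- The maximal extension of a quantum divergence `D` (defined on normalized states) to
subnormalized states: the infimum of `D(ρ‖σ)` over all density matrices `ρ, σ` on some
system and trace-non-increasing CP maps `ℰ` with `ℰ(ρ) = ρ̃`, `ℰ(σ) = σ̃`. -/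
noncomputable def maxExtSub
    (D : ∀ (m : Type) [Fintype m] [DecidableEq m],
      Matrix m m ℂ → Matrix m m ℂ → ℝ≥0∞)
    {n : Type} [Fintype n] (ρt σt : Matrix n n ℂ) : ℝ≥0∞ :=
  sInf { v | ∃ (r : ℕ) (ρ σ : Matrix (Fin r) (Fin r) ℂ)
      (Φ : Matrix (Fin r) (Fin r) ℂ → Matrix n n ℂ),
    IsDensity ρ ∧ IsDensity σ ∧ IsTNICP Φ ∧ Φ ρ = ρt ∧ Φ σ = σt ∧ v = D (Fin r) ρ σ }

/-! ### Auxiliary lemmas -/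

open Matrix in
lemma posSemidef_of_qf {m : Type} [Fintype m] [DecidableEq m] {M : Matrix m m ℂ}
    (h : ∀ x : m → ℂ, 0 ≤ star x ⬝ᵥ M *ᵥ x) : M.PosSemidef := by
  refine Matrix.PosSemidef.of_dotProduct_mulVec_nonneg ?_ h
  rw [Matrix.isHermitian_iff_isSymmetric, LinearMap.isSymmetric_iff_inner_map_self_real,
    (WithLp.equiv 2 (m → ℂ)).symm.surjective.forall]
  intro x
  simp only [WithLp.equiv_symm_apply, Matrix.toEuclideanLin_toLp, EuclideanSpace.inner_toLp_toLp,
    Matrix.toLin'_apply]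
  have hQ := h x
  have him : (star x ⬝ᵥ M *ᵥ x).im = 0 := by
    have := (Complex.le_def.mp hQ).2
    simpa using this.symm
  have hre : star (M *ᵥ x) ⬝ᵥ x = star (star x ⬝ᵥ M *ᵥ x) := by
    simp [dotProduct, Finset.mul_sum, mul_comm, star_sum]
  rw [dotProduct_comm x, hre]
  exact Complex.conj_eq_iff_im.mpr (by simp [him])

lemma psd_diag {m : Type} [Fintype m] [DecidableEq m] {M : Matrix m m ℂ}
    (h : M.PosSemidef) (i : m) : 0 ≤ M i i := by
  simpa [dotProduct, Matrix.mulVec, Pi.single_apply] using h.dotProduct_mulVec_nonneg (Pi.single i 1)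

lemma psd_trace_re_nonneg {m : Type} [Fintype m] [DecidableEq m] {M : Matrix m m ℂ}
    (h : M.PosSemidef) : 0 ≤ M.trace.re := by
  rw [Matrix.trace, Complex.re_sum]
  exact Finset.sum_nonneg fun i _ => (Complex.nonneg_iff.mp (psd_diag h i)).1

lemma psd_trace_eq {m : Type} [Fintype m] [DecidableEq m] {M : Matrix m m ℂ}
    (h : M.PosSemidef) : M.trace = (M.trace.re : ℂ) := by
  have him : M.trace.im = 0 := by
    rw [Matrix.trace, Complex.im_sum]
    exact Finset.sum_eq_zero fun i _ => ((Complex.nonneg_iff.mp (psd_diag h i)).2).symm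
  exact (Complex.conj_eq_iff_re.mp (Complex.conj_eq_iff_im.mpr him)).symm

open Matrix in
lemma fromBlocks_psd {p q : Type} [Fintype p] [Fintype q] [DecidableEq p] [DecidableEq q]
    {A : Matrix p p ℂ} {Dm : Matrix q q ℂ} (hA : A.PosSemidef) (hD : Dm.PosSemidef) :
    (Matrix.fromBlocks A 0 0 Dm).PosSemidef := by
  apply posSemidef_of_qf
  intro x
  rw [Matrix.fromBlocks_mulVec]
  simp only [Matrix.zero_mulVec, add_zero, zero_add]
  have hsx : star x = Sum.elim (star (x ∘ Sum.inl)) (star (x ∘ Sum.inr)) := by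
    ext s; cases s <;> rfl
  rw [hsx, sumElim_dotProduct_sumElim]
  exact add_nonneg (hA.dotProduct_mulVec_nonneg _) (hD.dotProduct_mulVec_nonneg _)

lemma trace_appendBlock {n : Type} [Fintype n] (X : Matrix n n ℂ) (c : ℂ) :
    (appendBlock X c).trace = X.trace + c := by
  simp [Matrix.trace, appendBlock, Fintype.sum_sum_type, Matrix.fromBlocks, Matrix.diag]

lemma appendBlock_density {n : Type} [Fintype n] [DecidableEq n] {ρ : Matrix n n ℂ}
    (h : IsSubnormalized ρ) : IsDensity (appendBlock ρ (1 - ρ.trace)) := by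
  obtain ⟨hpsd, htr⟩ := h
  have hc : (0 : ℂ) ≤ 1 - ρ.trace := by
    rw [psd_trace_eq hpsd]
    have h1 : (1 : ℂ) - (ρ.trace.re : ℂ) = ((1 - ρ.trace.re : ℝ) : ℂ) := by push_cast; ring
    rw [h1]
    exact Complex.zero_le_real.mpr (by linarith)
  constructor
  · have heq : appendBlock ρ (1 - ρ.trace) =
        Matrix.fromBlocks ρ 0 0 (Matrix.diagonal fun _ : Unit => 1 - ρ.trace) := by
      ext i j
      cases i <;> cases j <;>
        simp [appendBlock, Matrix.fromBlocks, Matrix.diagonal]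
    rw [heq]
    exact fromBlocks_psd hpsd (Matrix.PosSemidef.diagonal fun _ => hc)
  · rw [trace_appendBlock]; ring

/-! ### Linearity helpers -/

section Lin
variable {a b : Type} [Fintype a] [Fintype b]
  {Φ : Matrix a a ℂ → Matrix b b ℂ}
  (hlin : ∀ (c : ℂ) (A B : Matrix a a ℂ), Φ (c • A + B) = c • Φ A + Φ B)

include hlin

lemma lin_zero : Φ 0 = 0 := by
  have := hlin 1 0 0
  simp only [smul_zero, add_zero, one_smul] at this
  have h2 : Φ 0 = Φ 0 + Φ 0 := by simpa using this
  have := left_eq_add.mp h2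
  simpa using this

lemma lin_add (A B : Matrix a a ℂ) : Φ (A + B) = Φ A + Φ B := by
  simpa using hlin 1 A B

lemma lin_smul (c : ℂ) (A : Matrix a a ℂ) : Φ (c • A) = c • Φ A := by
  have := hlin c A 0
  simpa [lin_zero hlin] using this

/-- Package a map satisfying the linearity axiom as a `LinearMap`. -/
noncomputable def mkLin : Matrix a a ℂ →ₗ[ℂ] Matrix b b ℂ where
  toFun := Φ
  map_add' := lin_add hlin
  map_smul' := lin_smul hlin

lemma mkLin_apply (A : Matrix a a ℂ) : mkLin hlin A = Φ A := rfl

end Lin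

/-- A CP map preserves positive semidefiniteness. -/
lemma isCP_pos {a b : Type} [Fintype a] [Fintype b] [DecidableEq a] [DecidableEq b]
    {Φ : Matrix a a ℂ → Matrix b b ℂ} (hcp : IsCP Φ)
    {N : Matrix a a ℂ} (hN : N.PosSemidef) : (Φ N).PosSemidef := by
  have h1 := hcp Unit (N.submatrix Prod.snd Prod.snd) (hN.submatrix _)
  have h2 : Φ N = (cpExt Φ Unit (N.submatrix Prod.snd Prod.snd)).submatrix
      (fun i : b => (((), i) : Unit × b)) (fun i : b => (((), i) : Unit × b)) := rfl
  rw [h2]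
  exact h1.submatrix _

lemma cpExt_submatrix {a b : Type} (f : b → a) (m : Type) (M : Matrix (m × a) (m × a) ℂ) :
    cpExt (fun A : Matrix a a ℂ => A.submatrix f f) m M =
      M.submatrix (Prod.map id f) (Prod.map id f) := rfl

lemma submatrix_isCP {a b : Type} [Fintype a] [Fintype b] (f : b → a) :
    IsCP (fun A : Matrix a a ℂ => A.submatrix f f) := by
  intro m _ M hM
  rw [cpExt_submatrix]
  exact hM.submatrix _

/-- Reindexing along an equivalence is a quantum channel. -/
lemma submatrix_isCPTP {a b : Type} [Fintype a] [Fintype b] [DecidableEq a] [DecidableEq b]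
    (e : b ≃ a) : IsCPTP (fun M : Matrix a a ℂ => M.submatrix e e) := by
  refine ⟨fun c A B => by ext i j; simp [Matrix.submatrix], submatrix_isCP e, fun A => ?_⟩
  simp only [Matrix.trace, Matrix.diag, Matrix.submatrix_apply]
  exact Fintype.sum_equiv e _ _ (fun _ => rfl)

/-- Compression along an injection is trace-non-increasing CP. -/
lemma submatrix_isTNICP {a b : Type} [Fintype a] [Fintype b] [DecidableEq a] [DecidableEq b]
    (f : b → a) (hf : Function.Injective f) :
    IsTNICP (fun M : Matrix a a ℂ => M.submatrix f f) := by
  refine ⟨fun c A B => by ext i j; simp [Matrix.submatrix], submatrix_isCP f, fun A hA => ?_⟩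
  simp only [Matrix.trace, Matrix.diag, Matrix.submatrix_apply, Complex.re_sum]
  rw [← Finset.sum_image (g := f) (f := fun j => (A j j).re)
    (fun x _ y _ h => hf h)]
  exact Finset.sum_le_sum_of_subset_of_nonneg (Finset.subset_univ _)
    (fun j _ _ => (Complex.nonneg_iff.mp (psd_diag hA j)).1)

lemma qf_expand {m : Type} [Fintype m] (M : Matrix m m ℂ) (z : m → ℂ) :
    star z ⬝ᵥ M *ᵥ z = ∑ p, ∑ q, star (z p) * z q * M p q := by
  simp only [dotProduct, Matrix.mulVec, Pi.star_apply, Finset.mul_sum]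
  exact Finset.sum_congr rfl fun p _ => Finset.sum_congr rfl fun q _ => by ring

lemma sum4_comm {m a : Type} [Fintype m] [Fintype a] (t : a → a → m → m → ℂ) :
    ∑ k, ∑ l, ∑ p, ∑ q, t k l p q = ∑ p, ∑ k, ∑ q, ∑ l, t k l p q :=
  calc ∑ k, ∑ l, ∑ p, ∑ q, t k l p q
      = ∑ k, ∑ p, ∑ l, ∑ q, t k l p q :=
        Finset.sum_congr rfl fun k _ => Finset.sum_comm
    _ = ∑ p, ∑ k, ∑ l, ∑ q, t k l p q := Finset.sum_comm
    _ = ∑ p, ∑ k, ∑ q, ∑ l, t k l p q :=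
        Finset.sum_congr rfl fun p _ => Finset.sum_congr rfl fun k _ => Finset.sum_comm

/-! ### The completion of a TNI CP map to a channel -/

section Psi
variable {a n : Type} [Fintype a] [Fintype n] [DecidableEq a] [DecidableEq n]
  {Φ : Matrix a a ℂ → Matrix n n ℂ} (hΦ : IsTNICP Φ)

/-- The block matrix reformulation of `cpExt` of the completed map. -/
lemma cpExt_psi_eq (m : Type) [Fintype m] (M : Matrix (m × a) (m × a) ℂ) :
    cpExt (fun X => appendBlock (Φ X) (X.trace - (Φ X).trace)) m M =
      (Matrix.fromBlocks (cpExt Φ m M) 0 0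
        (Matrix.of fun p q : m =>
          (Matrix.of fun k l => M (p, k) (q, l)).trace
            - (Φ (Matrix.of fun k l => M (p, k) (q, l))).trace)).submatrix
        (fun ps : m × (n ⊕ Unit) => Sum.map (fun x => (ps.1, x)) (fun _ => ps.1) ps.2)
        (fun ps : m × (n ⊕ Unit) => Sum.map (fun x => (ps.1, x)) (fun _ => ps.1) ps.2) := by
  ext ⟨p, s⟩ ⟨q, t⟩
  cases s <;> cases t <;> rfl

include hΦ

lemma psi_isCPTP :
    IsCPTP (fun X : Matrix a a ℂ => appendBlock (Φ X) (X.trace - (Φ X).trace)) := by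
  obtain ⟨hlin, hcp, htni⟩ := hΦ
  refine ⟨?_, ?_, ?_⟩
  · -- linearity
    intro c A B
    ext s t
    cases s <;> cases t <;>
      simp [appendBlock, Matrix.fromBlocks, hlin c A B, Matrix.trace_add, Matrix.trace_smul,
        Matrix.add_apply, Matrix.smul_apply, smul_eq_mul] <;> ring
  · -- complete positivity
    intro m _ M hM
    rw [cpExt_psi_eq]
    set B : m → m → Matrix a a ℂ := fun p q => Matrix.of fun k l => M (p, k) (q, l) with hB
    refine Matrix.PosSemidef.submatrix ?_ _
    refine fromBlocks_psd (hcp m M hM) ?_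
    -- the complementary block is PSD
    apply posSemidef_of_qf
    intro z
    set N : Matrix a a ℂ := ∑ p : m, ∑ q : m, (star (z p) * z q) • B p q with hN
    have hNpsd : N.PosSemidef := by
      apply posSemidef_of_qf
      intro w
      have key : star w ⬝ᵥ N *ᵥ w =
          star (fun pk : m × a => z pk.1 * w pk.2) ⬝ᵥ
            M *ᵥ (fun pk : m × a => z pk.1 * w pk.2) := by
        rw [qf_expand, qf_expand, Fintype.sum_prod_type]
        simp only [hN, hB, Matrix.sum_apply, Matrix.smul_apply, smul_eq_mul,
          Matrix.of_apply, Pi.star_apply, star_mul', Finset.mul_sum, Fintype.sum_prod_type]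
        rw [sum4_comm (fun k l p q => star (w k) * w l * (star (z p) * z q * M (p, k) (q, l)))]
        refine Finset.sum_congr rfl fun p _ => Finset.sum_congr rfl fun k _ =>
          Finset.sum_congr rfl fun q _ => Finset.sum_congr rfl fun l _ => by ring
      rw [key]
      exact hM.dotProduct_mulVec_nonneg _
    have hΦN : (Φ N).PosSemidef := isCP_pos hcp hNpsd
    have h1 : star z ⬝ᵥ (Matrix.of fun p q : m =>
        (B p q).trace - (Φ (B p q)).trace) *ᵥ z = N.trace - (Φ N).trace := by
      have hPhiN : Φ N = ∑ p : m, ∑ q : m, (star (z p) * z q) • Φ (B p q) := by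
        show mkLin hlin N = _
        rw [hN, map_sum]
        refine Finset.sum_congr rfl fun p _ => ?_
        rw [map_sum]
        exact Finset.sum_congr rfl fun q _ => by rw [map_smul]; rfl
      rw [qf_expand]
      have htr1 : N.trace = ∑ p : m, ∑ q : m, (star (z p) * z q) * (B p q).trace := by
        rw [hN]
        simp [Matrix.trace_sum, Matrix.trace_smul, smul_eq_mul]
      have htr2 : (Φ N).trace = ∑ p : m, ∑ q : m, (star (z p) * z q) * (Φ (B p q)).trace := by
        rw [hPhiN]
        simp [Matrix.trace_sum, Matrix.trace_smul, smul_eq_mul]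
      rw [htr1, htr2, ← Finset.sum_sub_distrib]
      refine Finset.sum_congr rfl fun p _ => ?_
      rw [← Finset.sum_sub_distrib]
      refine Finset.sum_congr rfl fun q _ => ?_
      simp only [Matrix.of_apply]
      ring
    rw [h1, psd_trace_eq hNpsd, psd_trace_eq hΦN]
    have h2 : ((N.trace.re : ℂ)) - ((Φ N).trace.re : ℂ) =
        ((N.trace.re - (Φ N).trace.re : ℝ) : ℂ) := by push_cast; ring
    rw [h2]
    exact Complex.zero_le_real.mpr (by linarith [htni N hNpsd])
  · -- trace preservation
    intro A
    rw [trace_appendBlock]; ring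

end Psi

/-- **Closed formula for the maximal extension to subnormalized states.** For any
quantum divergence `D` and subnormalized states `ρ̃, σ̃`:
`D̄(ρ̃‖σ̃) = D(ρ̃ ⊕ (1 - Tr ρ̃) ‖ σ̃ ⊕ (1 - Tr σ̃))`. -/
theorem stmt13
    (D : ∀ (m : Type) [Fintype m] [DecidableEq m],
      Matrix m m ℂ → Matrix m m ℂ → ℝ≥0∞)
    -- data-processing inequality under quantum channels
    (hdpi : ∀ (a b : Type) [Fintype a] [DecidableEq a] [Fintype b] [DecidableEq b]
      (Φ : Matrix a a ℂ → Matrix b b ℂ), IsCPTP Φ →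
      ∀ ρ σ : Matrix a a ℂ, IsDensity ρ → IsDensity σ → D b (Φ ρ) (Φ σ) ≤ D a ρ σ)
    (n : Type) [Fintype n] [DecidableEq n] (ρt σt : Matrix n n ℂ)
    (hρ : IsSubnormalized ρt) (hσ : IsSubnormalized σt) :
    maxExtSub D ρt σt =
      D (n ⊕ Unit) (appendBlock ρt (1 - ρt.trace)) (appendBlock σt (1 - σt.trace)) := by
  classical
  have hρdd : IsDensity (appendBlock ρt (1 - ρt.trace)) := appendBlock_density hρ
  have hσdd : IsDensity (appendBlock σt (1 - σt.trace)) := appendBlock_density hσ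
  set ρd := appendBlock ρt (1 - ρt.trace) with hρdef
  set σd := appendBlock σt (1 - σt.trace) with hσdef
  apply le_antisymm
  · -- `maxExtSub D ρt σt ≤ D _ ρd σd`
    set r : ℕ := Fintype.card (n ⊕ Unit) with hr
    set e : Fin r ≃ (n ⊕ Unit) := (Fintype.equivFin (n ⊕ Unit)).symm with he
    set ρ : Matrix (Fin r) (Fin r) ℂ := ρd.submatrix e e with hρ2
    set σ : Matrix (Fin r) (Fin r) ℂ := σd.submatrix e e with hσ2
    set f : n → Fin r := fun i => e.symm (Sum.inl i) with hf
    have hfinj : Function.Injective f := fun i j h => Sum.inl.inj (e.symm.injective h)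
    have hΦρ : ρ.submatrix f f = ρt := by
      ext i j
      simp [hρ2, hf, hρdef, appendBlock]
    have hΦσ : σ.submatrix f f = σt := by
      ext i j
      simp [hσ2, hf, hσdef, appendBlock]
    have hρdens : IsDensity ρ :=
      ⟨hρdd.1.submatrix _, ((submatrix_isCPTP e).2.2 ρd).trans hρdd.2⟩
    have hσdens : IsDensity σ :=
      ⟨hσdd.1.submatrix _, ((submatrix_isCPTP e).2.2 σd).trans hσdd.2⟩
    have hDeq : D (n ⊕ Unit) ρd σd = D (Fin r) ρ σ := by
      apply le_antisymm
      · have h1 : ρ.submatrix ⇑e.symm ⇑e.symm = ρd := by ext i j; simp [hρ2]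
        have h2 : σ.submatrix ⇑e.symm ⇑e.symm = σd := by ext i j; simp [hσ2]
        have := hdpi (Fin r) (n ⊕ Unit) (fun M => M.submatrix ⇑e.symm ⇑e.symm)
          (submatrix_isCPTP e.symm) ρ σ hρdens hσdens
        simpa only [h1, h2] using this
      · exact hdpi (n ⊕ Unit) (Fin r) (fun M => M.submatrix ⇑e ⇑e)
          (submatrix_isCPTP e) ρd σd hρdd hσdd
    apply sInf_le
    exact ⟨r, ρ, σ, fun M => M.submatrix f f, hρdens, hσdens,
      submatrix_isTNICP f hfinj, hΦρ, hΦσ, hDeq⟩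
  · -- `D _ ρd σd ≤ maxExtSub D ρt σt`
    apply le_sInf
    rintro v ⟨r, ρ, σ, Φ, hρ1, hσ1, hTN, hρe, hσe, rfl⟩
    have hcptp := psi_isCPTP hTN
    have hD := hdpi (Fin r) (n ⊕ Unit)
      (fun X => appendBlock (Φ X) (X.trace - (Φ X).trace)) hcptp ρ σ hρ1 hσ1
    have h1 : appendBlock (Φ ρ) (ρ.trace - (Φ ρ).trace) = ρd := by
      rw [hρe, hρ1.2, hρdef]
    have h2 : appendBlock (Φ σ) (σ.trace - (Φ σ).trace) = σd := by
      rw [hσe, hσ1.2, hσdef]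
    simpa [h1, h2] using hD
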